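/- Let n ≥ 2 and let i be an integer with 1 ≤ i ≤ n−1. For every permutation p of {1,…,n}, in the minmax tree T^m_p either p_i is an ancestor of p_{i+1}, or p_{i+1} is an ancestor of p_i. -/

import Mathlib

/-- Binary trees with natural-number labels, used to model minmax trees of
permutations. -/
inductive BTree where
  | nil : BTree
  | node : ℕ → BTree → BTree → BTree
deriving DecidableEq, Repr

namespace BTree

/-- The label of the root (if any). -/
def rootVal : BTree → Option ℕ
  | .nil => none
  | .node v _ _ => some v

/-- Whether the value `x` occurs as a label in the tree. -/
def memB : BTree → ℕ → Bool
  | .nil, _ => false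
  | .node v l r, x => (x == v) || memB l x || memB r x

/-- The number of children of the (unique, for permutations) node labelled `x`. -/
def numChildren : BTree → ℕ → ℕ
  | .nil, _ => 0
  | .node v l r, x =>
      if x = v then (if l = .nil then 0 else 1) + (if r = .nil then 0 else 1)
      else numChildren l x + numChildren r x

/-- `x` is a leaf of the tree: it occurs in the tree and has no children. -/
def IsLeaf (t : BTree) (x : ℕ) : Prop := t.memB x = true ∧ t.numChildren x = 0

instance (t : BTree) (x : ℕ) : Decidable (t.IsLeaf x) := by unfold IsLeaf; infer_instance

/-- `childB t x y = true` iff `x` is a child of `y` in `t`, i.e. `x` is the root of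
the left or the right subtree hanging from `y`. -/
def childB : BTree → ℕ → ℕ → Bool
  | .nil, _, _ => false
  | .node v l r, x, y =>
      ((y == v) && (l.rootVal == some x || r.rootVal == some x))
      || childB l x y || childB r x y

/-- `ancB t x y = true` iff `x` is a (strict) ancestor of `y` in `t`, i.e. `y` lies
in a subtree hanging from `x`. -/
def ancB : BTree → ℕ → ℕ → Bool
  | .nil, _, _ => false
  | .node v l r, x, y =>
      ((x == v) && (memB l y || memB r y)) || ancB l x y || ancB r x y

end BTree

/-- `x` is the leftmost-eligible extreme letter of `l`: the minimum or the maximum. -/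
def isExtreme (l : List ℕ) (x : ℕ) : Bool :=
  (l.min? == some x) || (l.max? == some x)

/-- Fuelled construction of the minmax tree of a list of distinct naturals:
split the list as `u ++ [m] ++ v` where `m` is the leftmost of the minimum and
maximum letters, put `m` at the root and recurse on `u` (left) and `v` (right). -/
def mmAux : ℕ → List ℕ → BTree
  | 0, _ => .nil
  | fuel+1, l =>
    if l.isEmpty then .nil
    else
      let k := l.findIdx (isExtreme l)
      .node (l.getD k 0) (mmAux fuel (l.take k)) (mmAux fuel (l.drop (k+1)))

/-- The minmax tree `T^m_p` of a word `l` (with distinct letters). -/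
def minmaxTree (l : List ℕ) : BTree := mmAux l.length l

/-- The word `p_1 p_2 … p_n` on the letters `{1,…,n}` associated to a permutation
`p` of `Fin n`. -/
def permList (n : ℕ) (p : Equiv.Perm (Fin n)) : List ℕ :=
  List.ofFn (fun i => (p i : ℕ) + 1)

/-- The `i`-th entry `p_i` (1-indexed) of the permutation `p`. -/
def entryAt (n : ℕ) (p : Equiv.Perm (Fin n)) (i : ℕ) : ℕ :=
  (permList n p).getD (i - 1) 0

lemma findIdx_isExtreme_lt (l : List ℕ) (hl : l ≠ []) :
    l.findIdx (isExtreme l) < l.length := by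
  apply List.findIdx_lt_length_of_exists
  obtain ⟨m, hm⟩ : ∃ m, l.min? = some m := by
    cases h : l.min? with
    | none => exact absurd (List.min?_eq_none_iff.mp h) hl
    | some m => exact ⟨m, rfl⟩
  exact ⟨m, List.min?_mem hm, by simp [isExtreme, hm]⟩

lemma BTree.ancB_node_left {t r : BTree} {v x y : ℕ} (h : t.ancB x y = true) :
    (BTree.node v t r).ancB x y = true := by simp [BTree.ancB, h]

lemma BTree.ancB_node_right {t r : BTree} {v x y : ℕ} (h : r.ancB x y = true) :
    (BTree.node v t r).ancB x y = true := by simp [BTree.ancB, h]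

lemma mmAux_succ_eq (f : ℕ) (l : List ℕ) (hne : l ≠ []) :
    mmAux (f + 1) l =
      .node (l.getD (l.findIdx (isExtreme l)) 0)
        (mmAux f (l.take (l.findIdx (isExtreme l))))
        (mmAux f (l.drop (l.findIdx (isExtreme l) + 1))) := by
  rw [mmAux, if_neg (by simp [hne])]

lemma mem_mmAux : ∀ (fuel : ℕ) (l : List ℕ), l.length ≤ fuel →
    ∀ x ∈ l, (mmAux fuel l).memB x = true := by
  intro fuel
  induction fuel with
  | zero =>
    intro l hl x hx
    simp only [Nat.le_zero, List.length_eq_zero_iff] at hl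
    simp [hl] at hx
  | succ f ih =>
    intro l hl x hx
    have hne : l ≠ [] := by rintro rfl; simp at hx
    set k := l.findIdx (isExtreme l) with hkdef
    have hk : k < l.length := findIdx_isExtreme_lt l hne
    rw [mmAux_succ_eq f l hne, ← hkdef, List.getD_eq_getElem l 0 hk]
    have hsplit : x ∈ l.take k ∨ x = l[k] ∨ x ∈ l.drop (k + 1) := by
      have h1 : x ∈ l.take k ++ (l[k] :: l.drop (k + 1)) := by
        rw [← List.drop_eq_getElem_cons hk, List.take_append_drop]; exact hx
      simp only [List.mem_append, List.mem_cons] at h1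
      tauto
    have hlt : (l.take k).length ≤ f := by simp [List.length_take]; omega
    have hld : (l.drop (k + 1)).length ≤ f := by simp [List.length_drop]; omega
    rcases hsplit with h | h | h
    · simp [BTree.memB, ih _ hlt x h]
    · simp [BTree.memB, h]
    · simp [BTree.memB, ih _ hld x h]

lemma anc_adjacent : ∀ (fuel : ℕ) (l : List ℕ) (j : ℕ), l.length ≤ fuel →
    (h : j + 1 < l.length) →
    (mmAux fuel l).ancB (l[j]'(by omega)) (l[j+1]'h) = true ∨
    (mmAux fuel l).ancB (l[j+1]'h) (l[j]'(by omega)) = true := by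
  intro fuel
  induction fuel with
  | zero => intro l j hl h; omega
  | succ f ih =>
    intro l j hl h
    have hne : l ≠ [] := by rintro rfl; simp at h
    set k := l.findIdx (isExtreme l) with hkdef
    have hk : k < l.length := findIdx_isExtreme_lt l hne
    rw [mmAux_succ_eq f l hne, ← hkdef, List.getD_eq_getElem l 0 hk]
    have hlt : (l.take k).length ≤ f := by simp [List.length_take]; omega
    have hld : (l.drop (k + 1)).length ≤ f := by simp [List.length_drop]; omega
    have hgd : l.getD k 0 = l[k] := List.getD_eq_getElem l 0 hk
    rcases Nat.lt_trichotomy (j + 1) k with hc | hc | hc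
    · -- both in the left subtree
      have hlen : j + 1 < (l.take k).length := by simp [List.length_take]; omega
      have e1 : (l.take k)[j]'(by omega) = l[j]'(by omega) := List.getElem_take
      have e2 : (l.take k)[j+1]'hlen = l[j+1]'h := List.getElem_take
      rcases ih (l.take k) j hlt hlen with h' | h'
      · rw [e1, e2] at h'; exact Or.inl (BTree.ancB_node_left h')
      · rw [e1, e2] at h'; exact Or.inr (BTree.ancB_node_left h')
    · -- l[j+1] is the root, l[j] in the left subtree
      right
      have e2 : l[j+1]'h = l[k] := by simp only [hc]
      have hmem : l[j]'(by omega) ∈ l.take k := by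
        have e1 : (l.take k)[j]'(by simp [List.length_take]; omega) = l[j]'(by omega) :=
          List.getElem_take
        exact e1 ▸ List.getElem_mem _
      have := mem_mmAux f (l.take k) hlt _ hmem
      simp [BTree.ancB, e2, this]
    · rcases Nat.lt_or_ge j k with hc2 | hc2
      · -- j < k < j + 1 impossible unless j = k... here j+1 > k and j < k : impossible
        omega
      rcases Nat.eq_or_lt_of_le hc2 with hc3 | hc3
      · -- l[j] is the root, l[j+1] in the right subtree
        left
        have e1 : l[j]'(by omega) = l[k] := by simp only [hc3]
        have hmem : l[j+1]'h ∈ l.drop (k + 1) := by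
          have e2 : (l.drop (k+1))[0]'(by simp [List.length_drop]; omega) = l[k+1+0] :=
            List.getElem_drop
          have e3 : l[k+1+0]'(by omega) = l[j+1]'h := by simp only [show k+1+0 = j+1 by omega]
          exact (e2.trans e3) ▸ List.getElem_mem _
        have := mem_mmAux f (l.drop (k+1)) hld _ hmem
        simp [BTree.ancB, e1, this]
      · -- both in the right subtree
        have hlen : (j - (k+1)) + 1 < (l.drop (k+1)).length := by
          simp [List.length_drop]; omega
        have e1 : (l.drop (k+1))[j-(k+1)]'(by omega) = l[j]'(by omega) := by
          rw [List.getElem_drop (i := k+1) (j := j-(k+1))]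
          simp only [show k+1+(j-(k+1)) = j by omega]
        have e2 : (l.drop (k+1))[(j-(k+1))+1]'hlen = l[j+1]'h := by
          rw [List.getElem_drop (i := k+1) (j := (j-(k+1))+1)]
          simp only [show k+1+((j-(k+1))+1) = j+1 by omega]
        rcases ih (l.drop (k+1)) (j-(k+1)) hld hlen with h' | h'
        · rw [e1, e2] at h'; exact Or.inl (BTree.ancB_node_right h')
        · rw [e1, e2] at h'; exact Or.inr (BTree.ancB_node_right h')

/-- For `n ≥ 2` and `1 ≤ i ≤ n − 1`, in the minmax tree of every
permutation `p` of `{1,…,n}`, either `p_i` is an ancestor of `p_{i+1}` or `p_{i+1}`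
is an ancestor of `p_i`. -/
theorem adjacent_entries_ancestor (n : ℕ) (hn : 2 ≤ n) (i : ℕ) (hi1 : 1 ≤ i)
    (hi2 : i ≤ n - 1) (p : Equiv.Perm (Fin n)) :
    (minmaxTree (permList n p)).ancB (entryAt n p i) (entryAt n p (i + 1)) = true ∨
    (minmaxTree (permList n p)).ancB (entryAt n p (i + 1)) (entryAt n p i) = true := by
  have hlen : (permList n p).length = n := by simp [permList]
  have h1 : i - 1 + 1 = i := by omega
  have hbound : (i - 1) + 1 < (permList n p).length := by rw [hlen]; omega
  have e1 : entryAt n p i = (permList n p)[i-1]'(by omega) := by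
    rw [entryAt, List.getD_eq_getElem _ 0 (by omega)]
  have e2 : entryAt n p (i+1) = (permList n p)[(i-1)+1]'hbound := by
    rw [entryAt, List.getD_eq_getElem _ 0 (by omega)]
    simp only [show i + 1 - 1 = (i-1)+1 by omega]
  rw [minmaxTree, e1, e2]
  exact anc_adjacent (permList n p).length (permList n p) (i-1) le_rfl hbound
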